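/- Let (X_n)_{n ≥ 0} be an i.i.d. sequence of integer-valued random variables with ℙ[X_0 ≥ -1] = 1 and ℙ[X_0 = -1] > 0, whose mean exists and lies in (0, ∞]. Then ∑_{k = -1}^{∞} ℙ[X_0 = k] · c^k = 1, where c = ℙ[∃ n ≥ 0, S_n = -1] ∈ (0, 1]. (Equivalently, k ↦ ℙ[X_0 = k] c^k is a probability distribution on {-1, 0, 1, 2, …}.) -/

import Mathlib

open MeasureTheory ProbabilityTheory
open scoped ENNReal Classical

set_option linter.unusedSectionVars false
set_option linter.unusedVariables false
namespace DoobAux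

variable {Ω : Type*} [MeasurableSpace Ω] (μ : Measure Ω) (X : ℕ → Ω → ℤ)

/-- extension of a finite tuple by zero -/
def extv (M : ℕ) (v : Fin M → ℤ) (l : ℕ) : ℤ := if h : l < M then v ⟨l, h⟩ else 0

noncomputable def pp (k : ℤ) : ℝ≥0∞ := μ {ω | X 0 ω = k}

def Q (j M : ℕ) (v : Fin M → ℤ) : Prop :=
  (∑ l ∈ Finset.range M, extv M v l) = -(j : ℤ) ∧
  ∀ m < M, (∑ l ∈ Finset.range m, extv M v l) ≠ -(j : ℤ)

def cylE (n M : ℕ) (v : Fin M → ℤ) : Set Ω := {ω | ∀ i < M, X (n + i) ω = extv M v i}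

def hitAt (n j M : ℕ) : Set Ω :=
  {ω | (∑ l ∈ Finset.range M, X (n + l) ω) = -(j : ℤ) ∧
       ∀ m < M, (∑ l ∈ Finset.range m, X (n + l) ω) ≠ -(j : ℤ)}

def hitEv (n j : ℕ) : Set Ω := {ω | ∃ m, (∑ l ∈ Finset.range m, X (n + l) ω) = -(j : ℤ)}

noncomputable def bb (j M : ℕ) : ℝ≥0∞ :=
  ∑' v : Fin M → ℤ, if Q j M v then ∏ i ∈ Finset.range M, pp μ X (extv M v i) else 0

noncomputable def qq (j : ℕ) : ℝ≥0∞ := μ (hitEv X 0 j)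

section meas

theorem meas_sumset (hmeas : ∀ n, Measurable (X n)) (n m : ℕ) (a : ℤ) :
    MeasurableSet {ω | (∑ l ∈ Finset.range m, X (n + l) ω) = a} :=
  (Finset.measurable_sum _ fun l _ => hmeas (n + l)) (measurableSet_singleton a)

theorem meas_cylE (hmeas : ∀ n, Measurable (X n)) (n M : ℕ) (v : Fin M → ℤ) : MeasurableSet (cylE X n M v) := by
  have : cylE X n M v = ⋂ i, ⋂ (_ : i < M), {ω | X (n + i) ω = extv M v i} := by
    ext ω; simp [cylE]
  rw [this]
  exact MeasurableSet.iInter fun i => MeasurableSet.iInter fun _ =>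
    hmeas (n + i) (measurableSet_singleton _)

theorem meas_hitAt (hmeas : ∀ n, Measurable (X n)) (n j M : ℕ) : MeasurableSet (hitAt X n j M) := by
  have : hitAt X n j M = {ω | (∑ l ∈ Finset.range M, X (n + l) ω) = -(j : ℤ)} ∩
      ⋂ m, ⋂ (_ : m < M), {ω | (∑ l ∈ Finset.range m, X (n + l) ω) = -(j : ℤ)}ᶜ := by
    ext ω; simp only [hitAt, Set.mem_setOf_eq, Set.mem_inter_iff, Set.mem_iInter,
      Set.mem_compl_iff]
  rw [this]
  exact (meas_sumset X hmeas n M _).inter (MeasurableSet.iInter fun m =>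
    MeasurableSet.iInter fun _ => (meas_sumset X hmeas n m _).compl)

theorem meas_hitEv (hmeas : ∀ n, Measurable (X n)) (n j : ℕ) : MeasurableSet (hitEv X n j) := by
  have : hitEv X n j = ⋃ m, {ω | (∑ l ∈ Finset.range m, X (n + l) ω) = -(j : ℤ)} := by
    ext ω; simp [hitEv]
  rw [this]
  exact MeasurableSet.iUnion fun m => meas_sumset X hmeas n m _

end meas

section laws
variable [IsProbabilityMeasure μ]

theorem master (hmeas : ∀ n, Measurable (X n))
    (hindep : iIndepFun X μ)
    (hident : ∀ n, IdentDistrib (X n) (X 0) μ μ) (S : Finset ℕ) (w : ℕ → ℤ) :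
    μ (⋂ i ∈ S, {ω | X i ω = w i}) = ∏ i ∈ S, pp μ X (w i) := by
  have h1 : μ (⋂ i ∈ S, (X i ⁻¹' {w i})) = ∏ i ∈ S, μ (X i ⁻¹' {w i}) :=
    hindep.meas_biInter (fun i _ => ⟨{w i}, measurableSet_singleton _, rfl⟩)
  have h2 : ∀ i, (X i ⁻¹' {w i}) = {ω | X i ω = w i} := fun i => rfl
  simp only [h2] at h1
  rw [h1]
  refine Finset.prod_congr rfl fun i _ => ?_
  have := (hident i).measure_mem_eq (measurableSet_singleton (w i))
  simp only [pp]; exact this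

theorem cylE_meas (hmeas : ∀ n, Measurable (X n))
    (hindep : iIndepFun X μ)
    (hident : ∀ n, IdentDistrib (X n) (X 0) μ μ) (n M : ℕ) (v : Fin M → ℤ) :
    μ (cylE X n M v) = ∏ i ∈ Finset.range M, pp μ X (extv M v i) := by
  have hset : cylE X n M v
      = ⋂ i ∈ Finset.Ico n (n + M), {ω | X i ω = extv M v (i - n)} := by
    ext ω
    simp only [cylE, Set.mem_setOf_eq, Set.mem_iInter, Finset.mem_Ico]
    constructor
    · rintro h i ⟨h1, h2⟩
      have := h (i - n) (by omega)
      rwa [Nat.add_sub_cancel' h1] at this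
    · intro h i hi
      have := h (n + i) ⟨by omega, by omega⟩
      rwa [Nat.add_sub_cancel_left] at this
  rw [hset, master μ X hmeas hindep hident, Finset.prod_Ico_eq_prod_range]
  simp

theorem cylE_inter_cylE_meas (hmeas : ∀ n, Measurable (X n))
    (hindep : iIndepFun X μ)
    (hident : ∀ n, IdentDistrib (X n) (X 0) μ μ) (M m' : ℕ) (u : Fin M → ℤ)
    (w : Fin m' → ℤ) :
    μ (cylE X 0 M u ∩ cylE X M m' w) =
      (∏ i ∈ Finset.range M, pp μ X (extv M u i)) *
        ∏ i ∈ Finset.range m', pp μ X (extv m' w i) := by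
  set vc : ℕ → ℤ := fun i => if i < M then extv M u i else extv m' w (i - M) with hvc
  have hset : cylE X 0 M u ∩ cylE X M m' w
      = ⋂ i ∈ Finset.range (M + m'), {ω | X i ω = vc i} := by
    ext ω
    simp only [cylE, Set.mem_inter_iff, Set.mem_setOf_eq, Set.mem_iInter, Finset.mem_range]
    constructor
    · rintro ⟨h1, h2⟩ i hi
      by_cases hiM : i < M
      · have := h1 i hiM
        rw [Nat.zero_add] at this
        simp [hvc, hiM, this]
      · have := h2 (i - M) (by omega)
        rw [Nat.add_sub_cancel' (by omega : M ≤ i)] at this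
        simp [hvc, hiM, this]
    · intro h
      constructor
      · intro i hi
        have := h i (by omega)
        rw [Nat.zero_add]
        simpa [hvc, hi] using this
      · intro i hi
        have := h (M + i) (by omega)
        simp only [hvc] at this
        rw [if_neg (by omega), Nat.add_sub_cancel_left] at this
        exact this
  rw [hset, master μ X hmeas hindep hident, Finset.prod_range_add]
  congr 1
  · refine Finset.prod_congr rfl fun i hi => ?_
    simp only [Finset.mem_range] at hi
    simp [hvc, hi]
  · refine Finset.prod_congr rfl fun i hi => ?_
    simp [hvc, Nat.add_sub_cancel_left]

theorem sums_eq {n M : ℕ} {v : Fin M → ℤ} {ω : Ω} (hω : ω ∈ cylE X n M v) {m : ℕ}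
    (hm : m ≤ M) :
    (∑ l ∈ Finset.range m, X (n + l) ω) = ∑ l ∈ Finset.range m, extv M v l :=
  Finset.sum_congr rfl fun l hl => hω l (lt_of_lt_of_le (Finset.mem_range.mp hl) hm)

theorem cylE_disjoint {n M : ℕ} {u v : Fin M → ℤ} (huv : u ≠ v) :
    Disjoint (cylE X n M u) (cylE X n M v) := by
  obtain ⟨l, hl⟩ := Function.ne_iff.mp huv
  rw [Set.disjoint_left]
  intro ω hu hv
  have h1 := hu l.1 l.2
  have h2 := hv l.1 l.2
  rw [h1] at h2
  apply hl
  have hu' : extv M u l.1 = u l := by simp [extv, l.2]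
  have hv' : extv M v l.1 = v l := by simp [extv, l.2]
  rw [← hu', ← hv', h2]

theorem hitAt_eq_iUnion (n j M : ℕ) :
    hitAt X n j M = ⋃ v : Fin M → ℤ, (if Q j M v then cylE X n M v else (∅ : Set Ω)) := by
  ext ω
  simp only [Set.mem_iUnion]
  constructor
  · rintro ⟨h1, h2⟩
    refine ⟨fun l => X (n + l.1) ω, ?_⟩
    have hcyl : ω ∈ cylE X n M (fun l => X (n + l.1) ω) := by
      intro i hi; simp [extv, hi]
    have hQ : Q j M (fun l => X (n + l.1) ω) := by
      constructor
      · rw [← sums_eq X hcyl le_rfl]; exact h1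
      · intro m hm
        rw [← sums_eq X hcyl hm.le]
        exact h2 m hm
    rw [if_pos hQ]; exact hcyl
  · rintro ⟨v, hv⟩
    by_cases hQ : Q j M v
    · rw [if_pos hQ] at hv
      exact ⟨by rw [sums_eq X hv le_rfl]; exact hQ.1,
        fun m hm => by rw [sums_eq X hv hm.le]; exact hQ.2 m hm⟩
    · rw [if_neg hQ] at hv; exact absurd hv (Set.notMem_empty ω)

theorem ite_pairwise_disjoint (n j M : ℕ) :
    Pairwise (Function.onFun Disjoint
      fun v : Fin M → ℤ => if Q j M v then cylE X n M v else (∅ : Set Ω)) := by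
  intro u v huv
  unfold Function.onFun
  dsimp only
  by_cases hu : Q j M u
  · by_cases hv : Q j M v
    · rw [if_pos hu, if_pos hv]; exact cylE_disjoint X huv
    · rw [if_neg hv]; exact Set.disjoint_empty _
  · rw [if_neg hu]; exact Set.empty_disjoint _

theorem hitAt_meas (hmeas : ∀ n, Measurable (X n))
    (hindep : iIndepFun X μ)
    (hident : ∀ n, IdentDistrib (X n) (X 0) μ μ) (n j M : ℕ) :
    μ (hitAt X n j M) = bb μ X j M := by
  rw [hitAt_eq_iUnion, measure_iUnion (ite_pairwise_disjoint X n j M)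
    (fun v => by split <;> first | exact meas_cylE X hmeas n M _ | exact MeasurableSet.empty)]
  rw [bb]
  congr 1
  ext v
  split
  · exact cylE_meas μ X hmeas hindep hident n M v
  · exact measure_empty

theorem hitAt_disjoint {n j : ℕ} {M M' : ℕ} (h : M ≠ M') :
    Disjoint (hitAt X n j M) (hitAt X n j M') := by
  wlog hMM : M < M' generalizing M M'
  · exact (this h.symm (by omega)).symm
  rw [Set.disjoint_left]
  rintro ω ⟨h1, _⟩ ⟨_, h2⟩
  exact h2 M hMM h1

theorem hitEv_eq_iUnion (n j : ℕ) : hitEv X n j = ⋃ M, hitAt X n j M := by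
  ext ω
  simp only [Set.mem_iUnion]
  constructor
  · rintro ⟨m, hm⟩
    have hex : ∃ m, (∑ l ∈ Finset.range m, X (n + l) ω) = -(j : ℤ) := ⟨m, hm⟩
    exact ⟨Nat.find hex, Nat.find_spec hex, fun m' hm' => Nat.find_min hex hm'⟩
  · rintro ⟨M, h1, _⟩
    exact ⟨M, h1⟩

theorem hitEv_meas (hmeas : ∀ n, Measurable (X n))
    (hindep : iIndepFun X μ)
    (hident : ∀ n, IdentDistrib (X n) (X 0) μ μ) (n j : ℕ) :
    μ (hitEv X n j) = ∑' M, bb μ X j M := by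
  rw [hitEv_eq_iUnion, measure_iUnion (fun M M' h => hitAt_disjoint X h)
    (fun M => meas_hitAt X hmeas n j M)]
  exact tsum_congr fun M => hitAt_meas μ X hmeas hindep hident n j M

theorem hitEv_shift (hmeas : ∀ n, Measurable (X n))
    (hindep : iIndepFun X μ)
    (hident : ∀ n, IdentDistrib (X n) (X 0) μ μ) (n j : ℕ) :
    μ (hitEv X n j) = qq μ X j := by
  rw [hitEv_meas μ X hmeas hindep hident n j, qq,
    hitEv_meas μ X hmeas hindep hident 0 j]

theorem cylE_inter_hitAt (hmeas : ∀ n, Measurable (X n))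
    (hindep : iIndepFun X μ)
    (hident : ∀ n, IdentDistrib (X n) (X 0) μ μ) (M j m' : ℕ) (u : Fin M → ℤ) :
    μ (cylE X 0 M u ∩ hitAt X M j m') =
      (∏ i ∈ Finset.range M, pp μ X (extv M u i)) * bb μ X j m' := by
  rw [hitAt_eq_iUnion, Set.inter_iUnion]
  rw [measure_iUnion]
  · rw [bb, ← ENNReal.tsum_mul_left]
    refine tsum_congr fun w => ?_
    by_cases hQ : Q j m' w
    · rw [if_pos hQ, if_pos hQ, cylE_inter_cylE_meas μ X hmeas hindep hident]
    · rw [if_neg hQ, if_neg hQ, Set.inter_empty, measure_empty, mul_zero]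
  · intro v w hvw
    exact Disjoint.mono Set.inter_subset_right Set.inter_subset_right
      (ite_pairwise_disjoint X M j m' hvw)
  · intro w
    refine (meas_cylE X hmeas 0 M u).inter ?_
    split
    · exact meas_cylE X hmeas M m' _
    · exact MeasurableSet.empty

theorem cylE_inter_hitEv (hmeas : ∀ n, Measurable (X n))
    (hindep : iIndepFun X μ)
    (hident : ∀ n, IdentDistrib (X n) (X 0) μ μ) (M j : ℕ) (u : Fin M → ℤ) :
    μ (cylE X 0 M u ∩ hitEv X M j) =
      (∏ i ∈ Finset.range M, pp μ X (extv M u i)) * qq μ X j := by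
  rw [hitEv_eq_iUnion, Set.inter_iUnion]
  rw [measure_iUnion]
  · rw [qq, hitEv_meas μ X hmeas hindep hident 0 j, ← ENNReal.tsum_mul_left]
    exact tsum_congr fun m' => cylE_inter_hitAt μ X hmeas hindep hident M j m' u
  · intro m m'' h
    exact Disjoint.mono Set.inter_subset_right Set.inter_subset_right (hitAt_disjoint X h)
  · exact fun m' => (meas_cylE X hmeas 0 M u).inter (meas_hitAt X hmeas M j m')

theorem hitAt_inter_hitEv (hmeas : ∀ n, Measurable (X n))
    (hindep : iIndepFun X μ)
    (hident : ∀ n, IdentDistrib (X n) (X 0) μ μ) (i M j : ℕ) :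
    μ (hitAt X 0 i M ∩ hitEv X M j) = bb μ X i M * qq μ X j := by
  rw [hitAt_eq_iUnion, Set.iUnion_inter]
  rw [measure_iUnion]
  · rw [bb, ← ENNReal.tsum_mul_right]
    refine tsum_congr fun u => ?_
    by_cases hQ : Q i M u
    · rw [if_pos hQ, if_pos hQ, cylE_inter_hitEv μ X hmeas hindep hident M j u]
    · rw [if_neg hQ, if_neg hQ, Set.empty_inter, measure_empty, zero_mul]
  · intro u v huv
    exact Disjoint.mono Set.inter_subset_left Set.inter_subset_left
      (ite_pairwise_disjoint X 0 i M huv)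
  · intro u
    refine MeasurableSet.inter ?_ (meas_hitEv X hmeas M j)
    split
    · exact meas_cylE X hmeas 0 M _
    · exact MeasurableSet.empty

theorem ivl (f : ℕ → ℤ) (hf : ∀ n, f n - 1 ≤ f (n + 1)) (t : ℤ) (m : ℕ)
    (h1 : f m ≤ t) (h2 : t ≤ f 0) : ∃ k ≤ m, f k = t := by
  induction m with
  | zero => exact ⟨0, le_rfl, le_antisymm h1 h2⟩
  | succ m ih =>
    by_cases h : f m ≤ t
    · obtain ⟨k, hk, hfk⟩ := ih h
      exact ⟨k, by omega, hfk⟩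
    · have := hf m
      exact ⟨m + 1, le_rfl, by omega⟩

theorem null_bad (hident : ∀ n, IdentDistrib (X n) (X 0) μ μ)
    (hskip : ∀ᵐ ω ∂μ, -1 ≤ X 0 ω) : μ {ω | ¬ ∀ n, -1 ≤ X n ω} = 0 := by
  have h0 : μ {ω | ¬ (-1 ≤ X 0 ω)} = 0 := by rwa [← ae_iff]
  have : {ω | ¬ ∀ n, -1 ≤ X n ω} = ⋃ n, {ω | ¬ (-1 ≤ X n ω)} := by
    ext ω; simp
  rw [this]
  refine measure_iUnion_null fun n => ?_
  have hpre : ∀ k, {ω | ¬ (-1 ≤ X k ω)} = X k ⁻¹' {z : ℤ | ¬ (-1 ≤ z)} := fun k => rfl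
  rw [hpre, (hident n).measure_mem_eq (Set.to_countable _).measurableSet, ← hpre 0]
  exact h0

theorem qq_mul (hmeas : ∀ n, Measurable (X n))
    (hindep : iIndepFun X μ)
    (hident : ∀ n, IdentDistrib (X n) (X 0) μ μ)
    (hskip : ∀ᵐ ω ∂μ, -1 ≤ X 0 ω) (i j : ℕ) :
    qq μ X (i + j) = qq μ X i * qq μ X j := by
  set U := ⋃ M, (hitAt X 0 i M ∩ hitEv X M j) with hU
  have hUmeas : ∀ M : ℕ, MeasurableSet (hitAt X 0 i M ∩ hitEv X M j) := fun M =>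
    (meas_hitAt X hmeas 0 i M).inter (meas_hitEv X hmeas M j)
  have hμU : μ U = qq μ X i * qq μ X j := by
    rw [hU, measure_iUnion (fun M M' h => Disjoint.mono Set.inter_subset_left
      Set.inter_subset_left (hitAt_disjoint X h)) hUmeas]
    have : ∀ M, μ (hitAt X 0 i M ∩ hitEv X M j) = bb μ X i M * qq μ X j := fun M =>
      hitAt_inter_hitEv μ X hmeas hindep hident i M j
    rw [tsum_congr this, ENNReal.tsum_mul_right]
    congr 1
    rw [qq, hitEv_meas μ X hmeas hindep hident]
  have hsub : U ⊆ hitEv X 0 (i + j) := by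
    intro ω hω
    obtain ⟨M, ⟨hAt, m, hm⟩⟩ := Set.mem_iUnion.mp hω
    obtain ⟨hAt1, -⟩ := hAt
    refine ⟨M + m, ?_⟩
    simp only [Nat.zero_add] at hAt1 ⊢
    rw [Finset.sum_range_add, hAt1, hm]
    push_cast; ring
  have hsup : hitEv X 0 (i + j) ∩ {ω | ∀ n, -1 ≤ X n ω} ⊆ U := by
    rintro ω ⟨⟨ms, hms⟩, hG⟩
    simp only [Nat.zero_add] at hms
    set f : ℕ → ℤ := fun m => ∑ l ∈ Finset.range m, X l ω with hf
    have hstep : ∀ n, f n - 1 ≤ f (n + 1) := by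
      intro n
      have := hG n
      simp only [hf, Finset.sum_range_succ]
      omega
    have h0 : f 0 = 0 := by simp [hf]
    obtain ⟨m₀, hm₀le, hm₀⟩ := ivl f hstep (-(i : ℤ)) ms
      (by rw [show f ms = -((i : ℤ) + (j : ℤ)) by rw [hf]; push_cast at hms ⊢; exact hms]
          omega)
      (by omega)
    have hex : ∃ k, f k = -(i : ℤ) := ⟨m₀, hm₀⟩
    have hMle : Nat.find hex ≤ ms := le_trans (Nat.find_min' hex hm₀) hm₀le
    refine Set.mem_iUnion.mpr ⟨Nat.find hex, ⟨?_, ?_⟩, ?_⟩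
    · simp only [Nat.zero_add]
      exact Nat.find_spec hex
    · intro m hm
      simp only [Nat.zero_add]
      exact Nat.find_min hex hm
    · refine ⟨ms - Nat.find hex, ?_⟩
      have hsum : f (Nat.find hex + (ms - Nat.find hex)) = f (Nat.find hex) +
          ∑ l ∈ Finset.range (ms - Nat.find hex), X (Nat.find hex + l) ω :=
        Finset.sum_range_add _ _ _
      rw [Nat.add_sub_cancel' hMle] at hsum
      have h1 : f ms = -((i : ℤ) + (j : ℤ)) := by rw [hf]; push_cast at hms ⊢; exact hms
      have h2 : f (Nat.find hex) = -(i : ℤ) := Nat.find_spec hex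
      omega
  have hbad := null_bad μ X hident hskip
  have hle1 : μ (hitEv X 0 (i + j)) ≤ μ U := by
    have : hitEv X 0 (i + j) ⊆ U ∪ {ω | ¬ ∀ n, -1 ≤ X n ω} := by
      intro ω hω
      by_cases hG : ∀ n, -1 ≤ X n ω
      · exact Or.inl (hsup ⟨hω, hG⟩)
      · exact Or.inr hG
    calc μ (hitEv X 0 (i + j)) ≤ μ (U ∪ {ω | ¬ ∀ n, -1 ≤ X n ω}) := measure_mono this
      _ ≤ μ U + μ {ω | ¬ ∀ n, -1 ≤ X n ω} := measure_union_le _ _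
      _ = μ U := by rw [hbad, add_zero]
  have : μ (hitEv X 0 (i + j)) = μ U := le_antisymm hle1 (measure_mono hsub)
  rw [qq, this, hμU]

theorem qq_zero : qq μ X 0 = 1 := by
  have : hitEv X 0 0 = Set.univ := by
    ext ω
    simp only [hitEv, Set.mem_setOf_eq, Set.mem_univ, iff_true]
    exact ⟨0, by simp⟩
  rw [qq, this, measure_univ]

theorem qq_pow (hmeas : ∀ n, Measurable (X n))
    (hindep : iIndepFun X μ)
    (hident : ∀ n, IdentDistrib (X n) (X 0) μ μ)
    (hskip : ∀ᵐ ω ∂μ, -1 ≤ X 0 ω) (j : ℕ) :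
    qq μ X j = (qq μ X 1) ^ j := by
  induction j with
  | zero => rw [qq_zero, pow_zero]
  | succ j ih =>
    rw [show j + 1 = j + 1 from rfl, qq_mul μ X hmeas hindep hident hskip j 1, ih, pow_succ]

theorem single_cyl (k : ℤ) : {ω | X 0 ω = k} = cylE X 0 1 (fun _ => k) := by
  ext ω
  simp only [Set.mem_setOf_eq, cylE]
  constructor
  · intro h i hi
    have : i = 0 := by omega
    subst this
    simpa [extv] using h
  · intro h
    have := h 0 one_pos
    simpa [extv] using this

theorem first_step (hmeas : ∀ n, Measurable (X n))
    (hindep : iIndepFun X μ)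
    (hident : ∀ n, IdentDistrib (X n) (X 0) μ μ)
    (hskip : ∀ᵐ ω ∂μ, -1 ≤ X 0 ω) :
    qq μ X 1 = ∑' n : ℕ, pp μ X ((n : ℤ) - 1) * qq μ X n := by
  set U := ⋃ n : ℕ, ({ω | X 0 ω = (n : ℤ) - 1} ∩ hitEv X 1 n) with hU
  have hUmeas : ∀ n : ℕ, MeasurableSet ({ω | X 0 ω = (n : ℤ) - 1} ∩ hitEv X 1 n) := fun n =>
    (hmeas 0 (measurableSet_singleton _)).inter (meas_hitEv X hmeas 1 n)
  have hdisj : Pairwise (Function.onFun Disjoint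
      fun n : ℕ => ({ω | X 0 ω = (n : ℤ) - 1} ∩ hitEv X 1 n)) := by
    intro n n' hnn'
    unfold Function.onFun
    dsimp only
    rw [Set.disjoint_left]
    rintro ω ⟨h1, -⟩ ⟨h2, -⟩
    simp only [Set.mem_setOf_eq] at h1 h2
    rw [h1] at h2
    have : (n : ℤ) = (n' : ℤ) := by omega
    exact hnn' (by exact_mod_cast this)
  have hμU : μ U = ∑' n : ℕ, pp μ X ((n : ℤ) - 1) * qq μ X n := by
    rw [hU, measure_iUnion hdisj hUmeas]
    refine tsum_congr fun n => ?_
    rw [single_cyl, cylE_inter_hitEv μ X hmeas hindep hident 1 n]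
    congr 1
    simp [extv, pp]
  have hsub : U ⊆ hitEv X 0 1 := by
    intro ω hω
    obtain ⟨n, h1, m, hm⟩ := Set.mem_iUnion.mp hω
    refine ⟨1 + m, ?_⟩
    simp only [Nat.zero_add]
    rw [Finset.sum_range_add, Finset.sum_range_one, h1, hm]
    push_cast; ring
  have hsup : hitEv X 0 1 ∩ {ω | ∀ n, -1 ≤ X n ω} ⊆ U := by
    rintro ω ⟨⟨m, hm⟩, hG⟩
    simp only [Nat.zero_add] at hm
    have hm0 : m ≠ 0 := by
      intro h
      subst h
      simp at hm
    have h00 : -1 ≤ X 0 ω := hG 0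
    set n : ℕ := (X 0 ω + 1).toNat with hn
    have hcast : (n : ℤ) = X 0 ω + 1 := Int.toNat_of_nonneg (by omega)
    refine Set.mem_iUnion.mpr ⟨n, ?_, m - 1, ?_⟩
    · simp only [Set.mem_setOf_eq]
      omega
    · have hsum : (∑ l ∈ Finset.range (1 + (m - 1)), X l ω) =
          (∑ l ∈ Finset.range 1, X l ω) + ∑ l ∈ Finset.range (m - 1), X (1 + l) ω :=
        Finset.sum_range_add _ _ _
      rw [show 1 + (m - 1) = m by omega, Finset.sum_range_one] at hsum
      rw [hm] at hsum
      omega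
  have hbad := null_bad μ X hident hskip
  have hle1 : μ (hitEv X 0 1) ≤ μ U := by
    have : hitEv X 0 1 ⊆ U ∪ {ω | ¬ ∀ n, -1 ≤ X n ω} := by
      intro ω hω
      by_cases hG : ∀ n, -1 ≤ X n ω
      · exact Or.inl (hsup ⟨hω, hG⟩)
      · exact Or.inr hG
    calc μ (hitEv X 0 1) ≤ μ (U ∪ {ω | ¬ ∀ n, -1 ≤ X n ω}) := measure_mono this
      _ ≤ μ U + μ {ω | ¬ ∀ n, -1 ≤ X n ω} := measure_union_le _ _
      _ = μ U := by rw [hbad, add_zero]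
  have : μ (hitEv X 0 1) = μ U := le_antisymm hle1 (measure_mono hsub)
  rw [qq, this, hμU]

end laws

end DoobAux

open DoobAux

/-- For a skip-free to the left random walk with `ℙ[X_0 = -1] > 0` whose mean exists and
lies in `(0, ∞]`, one has `c ∈ (0, 1]` and `∑_{k=-1}^∞ ℙ[X_0 = k] c^k = 1` (the sum being
reindexed by `k = n - 1`, `n : ℕ`), where `c = ℙ[∃ n, S_n = -1]`; that is,
`k ↦ ℙ[X_0 = k] c^k` is a probability distribution on `{-1, 0, 1, 2, …}`. -/
theorem doob_transform_prob_dist {Ω : Type*} [MeasurableSpace Ω] (μ : Measure Ω)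
    [IsProbabilityMeasure μ] (X : ℕ → Ω → ℤ)
    (hmeas : ∀ n, Measurable (X n))
    (hindep : iIndepFun X μ)
    (hident : ∀ n, IdentDistrib (X n) (X 0) μ μ)
    (hskip : ∀ᵐ ω ∂μ, -1 ≤ X 0 ω)
    (hminus : 0 < μ {ω | X 0 ω = -1})
    (hnegpart : Integrable (fun ω => max (-(X 0 ω : ℝ)) 0) μ)
    (hmean : ¬ Integrable (fun ω => (X 0 ω : ℝ)) μ ∨ 0 < ∫ ω, (X 0 ω : ℝ) ∂μ) :
    0 < μ {ω | ∃ m : ℕ, ∑ l ∈ Finset.range m, X l ω = -1} ∧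
      μ {ω | ∃ m : ℕ, ∑ l ∈ Finset.range m, X l ω = -1} ≤ 1 ∧
      (∑' n : ℕ,
          μ {ω | X 0 ω = (n : ℤ) - 1} *
            (μ {ω | ∃ m : ℕ, ∑ l ∈ Finset.range m, X l ω = -1}) ^ ((n : ℤ) - 1)) = 1 := by
  have hE : {ω : Ω | ∃ m : ℕ, ∑ l ∈ Finset.range m, X l ω = -1} = hitEv X 0 1 := by
    ext ω
    simp [hitEv, Nat.zero_add]
  have hcq : μ {ω : Ω | ∃ m : ℕ, ∑ l ∈ Finset.range m, X l ω = -1} = qq μ X 1 := by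
    rw [hE, qq]
  set c := qq μ X 1 with hc
  have hpos : 0 < c := by
    rw [← hcq]
    refine lt_of_lt_of_le hminus (measure_mono ?_)
    intro ω hω
    exact ⟨1, by rw [Finset.sum_range_one]; exact hω⟩
  have hle : c ≤ 1 := by rw [← hcq]; exact prob_le_one
  have hc0 : c ≠ 0 := hpos.ne'
  have hctop : c ≠ ∞ := by
    rw [hc, qq]
    exact measure_ne_top μ _
  refine ⟨by rw [hcq]; exact hpos, by rw [hcq]; exact hle, ?_⟩
  have hfs := first_step μ X hmeas hindep hident hskip
  have hqpow := qq_pow μ X hmeas hindep hident hskip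
  have hpow : ∀ n : ℕ, c ^ n = c * c ^ ((n : ℤ) - 1) := by
    intro n
    have hn : ((n : ℕ) : ℤ) = 1 + ((n : ℤ) - 1) := by ring
    conv_lhs => rw [← zpow_natCast c n, hn, ENNReal.zpow_add hc0 hctop, zpow_one]
  have key : c * 1 = c * ∑' n : ℕ, pp μ X ((n : ℤ) - 1) * c ^ ((n : ℤ) - 1) := by
    rw [mul_one]
    conv_lhs => rw [hc, hfs]
    rw [← ENNReal.tsum_mul_left]
    refine tsum_congr fun n => ?_
    rw [hqpow n, hpow n]
    ring
  have hsum := ((ENNReal.mul_right_inj hc0 hctop).mp key).symm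
  rw [hcq]
  rw [← hsum]
  rfl
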